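/- Maximality principle: let ⟨A, N⟩ be a complete C_ω-structure whose underlying complete Heyting algebra A is refinable, and let ‖·‖ be a Leibniz truth-value interpretation on the A-names. If ‖∃x ψ(x)‖ = 1 for a formula ψ(x) with one free variable, then there exists an A-name u such that ‖ψ(u)‖ = 1. -/

import Mathlib

universe u

/-- The universe `V^A` of `A`-names over a complete Heyting algebra `A`:
an `A`-name is a function from a set (of previously constructed `A`-names)
into `A`, here encoded by an indexing type `ι`, a family `elts` of names and
the family `val` of their attached truth values. -/
inductive HName (A : Type u) : Type (u + 1) where
  | mk (ι : Type u) (elts : ι → HName A) (val : ι → A)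

namespace HName

variable {A : Type u}

/-- The indexing type of (the domain of) a name. -/
def ι : HName A → Type u
  | mk ι _ _ => ι

/-- The members of (the domain of) a name. -/
def elts : (u : HName A) → u.ι → HName A
  | mk _ e _ => e

/-- The values attached by a name to the members of its domain. -/
def val : (u : HName A) → u.ι → A
  | mk _ _ v => v

/-- Ordinal rank of a name (used for the recursive definition of truth values). -/
noncomputable def rank : HName A → Ordinal.{u}
  | mk _ e _ => Ordinal.lsub fun i => (e i).rank

theorem rank_lt {ι : Type u} (e : ι → HName A) (v : ι → A) (i : ι) :
    (e i).rank < (mk ι e v).rank := Ordinal.lt_lsub _ i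

variable [Order.Frame A]

/-- The truth value `‖u ≈ v‖` of equality of two names, defined by the recursion
`‖u ≈ v‖ = ⨅_{x ∈ dom u} (u(x) ⇨ ‖x ∈ v‖) ⊓ ⨅_{y ∈ dom v} (v(y) ⇨ ‖y ∈ u‖)`,
where `‖x ∈ v‖ = ⨆_{y ∈ dom v} (v(y) ⊓ ‖y ≈ x‖)` is inlined. -/
noncomputable def eqVal : HName A → HName A → A
  | mk ι e a, mk κ f b =>
      (⨅ i, a i ⇨ ⨆ j, b j ⊓ eqVal (f j) (e i)) ⊓
      (⨅ j, b j ⇨ ⨆ i, a i ⊓ eqVal (e i) (f j))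
termination_by u v => max u.rank v.rank
decreasing_by
  · exact max_lt (lt_max_of_lt_right (rank_lt f b j)) (lt_max_of_lt_left (rank_lt e a i))
  · exact max_lt (lt_max_of_lt_left (rank_lt e a i)) (lt_max_of_lt_right (rank_lt f b j))

/-- The truth value `‖u ∈ v‖ = ⨆_{x ∈ dom v} (v(x) ⊓ ‖x ≈ u‖)` of membership. -/
noncomputable def memVal (u v : HName A) : A :=
  ⨆ j : v.ι, v.val j ⊓ eqVal (v.elts j) u

end HName


/-- Terms of the first-order language of set theory expanded with all `A`-names
as constants: variables (de Bruijn indices) and names. -/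
inductive Tm (A : Type u) (n : Nat) : Type (u + 1) where
  | var (i : Fin n) : Tm A n
  | name (u : HName A) : Tm A n

/-- Formulas of the first-order language with binary predicates `∈` and `≈`,
connectives `∧`, `∨`, `→`, `¬` and quantifiers `∃`, `∀`, with `A`-names as
constants; `Fml A n` are the formulas with free variables among `n` de Bruijn
indices, and the quantifiers bind the last variable of the context. -/
inductive Fml (A : Type u) : Nat → Type (u + 1) where
  | mem {n} (t s : Tm A n) : Fml A n
  | eq {n} (t s : Tm A n) : Fml A n
  | and {n} (phi psi : Fml A n) : Fml A n
  | or {n} (phi psi : Fml A n) : Fml A n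
  | imp {n} (phi psi : Fml A n) : Fml A n
  | neg {n} (phi : Fml A n) : Fml A n
  | ex {n} (phi : Fml A (n + 1)) : Fml A n
  | all {n} (phi : Fml A (n + 1)) : Fml A n

variable {A : Type u}

/-- Evaluation of a term under an assignment of names to the free variables. -/
def Tm.eval {n : Nat} : Tm A n → (Fin n → HName A) → HName A
  | var i, rho => rho i
  | name u, _ => u

/-- Renaming (in particular, weakening) of the free variables of a term. -/
def Tm.rename {n m : Nat} (f : Fin n → Fin m) : Tm A n → Tm A m
  | var i => var (f i)
  | name u => name u

/-- Renaming (in particular, weakening) of the free variables of a formula. -/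
def Fml.rename : {n m : Nat} → (Fin n → Fin m) → Fml A n → Fml A m
  | _, _, f, mem t s => mem (t.rename f) (s.rename f)
  | _, _, f, eq t s => eq (t.rename f) (s.rename f)
  | _, _, f, and phi psi => and (phi.rename f) (psi.rename f)
  | _, _, f, or phi psi => or (phi.rename f) (psi.rename f)
  | _, _, f, imp phi psi => imp (phi.rename f) (psi.rename f)
  | _, _, f, neg phi => neg (phi.rename f)
  | _, _, f, ex phi => ex (phi.rename (Fin.snoc (Fin.castSucc ∘ f) (Fin.last _)))
  | _, _, f, all phi => all (phi.rename (Fin.snoc (Fin.castSucc ∘ f) (Fin.last _)))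

/-- `φ ↔ ψ` abbreviates `(φ → ψ) ∧ (ψ → φ)`. -/
def Fml.iff {n : Nat} (phi psi : Fml A n) : Fml A n :=
  .and (.imp phi psi) (.imp psi phi)

/-- A (complete) Fidel structure for `C_ω` over the complete Heyting algebra
`A`: for each `x ∈ A`, `N x` is a nonempty set of "possible negations" of `x`
such that `x ⊔ y = ⊤` for every `y ∈ N x` and, for every `y ∈ N x`, there is
`z ∈ N y` with `z ≤ x`. -/
def IsFidel [Order.Frame A] (N : A → Set A) : Prop :=
  ∀ x : A, (N x).Nonempty ∧ (∀ y ∈ N x, x ⊔ y = ⊤) ∧ ∀ y ∈ N x, ∃ z ∈ N y, z ≤ x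

/-- A Leibniz truth-value interpretation on the `A`-names over the complete
`C_ω`-structure `⟨A, N⟩`: a map assigning to every formula (with names as
constants) and every assignment of names to its free variables a truth value in
`A`, satisfying the atomic clauses for `∈` and `≈`, the compositional clauses
for `∧`, `∨`, `→`, `∃`, `∀`, the clauses `‖¬φ‖ ∈ N ‖φ‖` and `‖¬¬φ‖ ≤ ‖φ‖` for
the paraconsistent negation, and Leibniz law `‖u ≈ v‖ ≤ ‖φ(u) → φ(v)‖` for
every formula `φ(x)` with one free variable and all names `u`, `v`. -/
structure Interp (A : Type u) [Order.Frame A] (N : A → Set A) : Type (u + 1) where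
  val : {n : Nat} → Fml A n → (Fin n → HName A) → A
  val_mem : ∀ {n} (t s : Tm A n) (rho : Fin n → HName A),
    val (.mem t s) rho = HName.memVal (t.eval rho) (s.eval rho)
  val_eq : ∀ {n} (t s : Tm A n) (rho : Fin n → HName A),
    val (.eq t s) rho = HName.eqVal (t.eval rho) (s.eval rho)
  val_and : ∀ {n} (phi psi : Fml A n) (rho : Fin n → HName A),
    val (.and phi psi) rho = val phi rho ⊓ val psi rho
  val_or : ∀ {n} (phi psi : Fml A n) (rho : Fin n → HName A),
    val (.or phi psi) rho = val phi rho ⊔ val psi rho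
  val_imp : ∀ {n} (phi psi : Fml A n) (rho : Fin n → HName A),
    val (.imp phi psi) rho = val phi rho ⇨ val psi rho
  val_ex : ∀ {n} (phi : Fml A (n + 1)) (rho : Fin n → HName A),
    val (.ex phi) rho = ⨆ u : HName A, val phi (Fin.snoc rho u)
  val_all : ∀ {n} (phi : Fml A (n + 1)) (rho : Fin n → HName A),
    val (.all phi) rho = ⨅ u : HName A, val phi (Fin.snoc rho u)
  val_neg : ∀ {n} (phi : Fml A n) (rho : Fin n → HName A),
    val (.neg phi) rho ∈ N (val phi rho)
  val_negneg : ∀ {n} (phi : Fml A n) (rho : Fin n → HName A),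
    val (.neg (.neg phi)) rho ≤ val phi rho
  leibniz : ∀ (phi : Fml A 1) (u v : HName A),
    HName.eqVal u v ≤ val phi (fun _ => u) ⇨ val phi (fun _ => v)


/-- `A` is refinable if every subset `S` of `A` is refined by an antichain `B`
(every element of `B` lies below some element of `S`) with `⨆B = ⨆S`. -/
def Refinable (A : Type u) [Order.Frame A] : Prop :=
  ∀ S : Set A, ∃ B : Set A, (∀ b ∈ B, ∃ a ∈ S, b ≤ a) ∧
    (∀ b ∈ B, ∀ b' ∈ B, b ≠ b' → b ⊓ b' = ⊥) ∧ sSup B = sSup S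

namespace HName

variable [Order.Frame A]

/-- `eqVal` rewritten with accessors and `memVal`. -/
theorem eqVal_def (u v : HName A) :
    eqVal u v = (⨅ i, u.val i ⇨ memVal (u.elts i) v) ⊓
      (⨅ j, v.val j ⇨ memVal (v.elts j) u) := by
  cases u with
  | mk ι e a =>
    cases v with
    | mk κ f b =>
      rw [eqVal]
      rfl

theorem eqVal_refl : ∀ u : HName A, eqVal u u = ⊤ := by
  intro u
  induction u with
  | mk ι e a ih =>
    rw [eqVal_def]
    refine eq_top_iff.2 (le_inf ?_ ?_) <;>
    · refine le_iInf fun i => ?_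
      rw [le_himp_iff, top_inf_eq]
      refine le_trans ?_ (le_iSup _ i)
      show (mk ι e a).val i ≤ (mk ι e a).val i ⊓ eqVal ((mk ι e a).elts i) ((mk ι e a).elts i)
      rw [show eqVal ((mk ι e a).elts i) ((mk ι e a).elts i) = ⊤ from ih i, inf_top_eq]

theorem self_mem (u : HName A) (i : u.ι) : u.val i ≤ memVal (u.elts i) u := by
  refine le_trans ?_ (le_iSup _ i)
  rw [eqVal_refl, inf_top_eq]

end HName

/-- Maximality principle: over a complete `C_ω`-structure `⟨A, N⟩` whose
underlying complete Heyting algebra is refinable, for any Leibniz truth-value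
interpretation `‖·‖`, if `‖∃x ψ(x)‖ = 1` for a formula `ψ(x)` with one free
variable, then there is a name `u` with `‖ψ(u)‖ = 1`. -/
theorem maximality_principle {A : Type u} [Order.Frame A] {N : A → Set A}
    (hN : IsFidel N) (hA : Refinable A) (I : Interp A N) (psi : Fml A 1)
    (h : I.val (.ex psi) (fun i => i.elim0) = ⊤) :
    ∃ u : HName A, I.val psi (fun _ => u) = ⊤ := by
  classical
  rw [I.val_ex] at h
  have hsnoc : ∀ u : HName A,
      (Fin.snoc (fun i : Fin 0 => i.elim0) u : Fin 1 → HName A) = fun _ => u := by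
    intro u
    funext i
    have : i = Fin.last 0 := Fin.fin_one_eq_zero i
    rw [this, Fin.snoc_last]
  simp only [hsnoc] at h
  set S : Set A := Set.range (fun u : HName A => I.val psi (fun _ => u)) with hS
  have hSsup : sSup S = ⊤ := by rw [hS, sSup_range, h]
  obtain ⟨B, hBref, hBanti, hBsup⟩ := hA S
  have hf : ∀ b : ↥B, ∃ u : HName A, (b : A) ≤ I.val psi (fun _ => u) := by
    rintro ⟨b, hb⟩
    obtain ⟨a, ⟨v, hv⟩, hle⟩ := hBref b hb
    refine ⟨v, le_trans hle ?_⟩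
    exact le_of_eq hv.symm
  choose f hfle using hf
  set mix : HName A := HName.mk (Σ b : ↥B, (f b).ι)
    (fun p => (f p.1).elts p.2) (fun p => (p.1 : A) ⊓ (f p.1).val p.2) with hmix
  have hkey : ∀ b : ↥B, (b : A) ≤ HName.eqVal (f b) mix := by
    intro b
    rw [HName.eqVal_def]
    refine le_inf ?_ ?_
    · refine le_iInf fun i => ?_
      rw [le_himp_iff]
      refine le_trans ?_ (le_iSup _ (⟨b, i⟩ : Σ b : ↥B, (f b).ι))
      show (b : A) ⊓ (f b).val i ≤
        ((b : A) ⊓ (f b).val i) ⊓ HName.eqVal ((f b).elts i) ((f b).elts i)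
      rw [HName.eqVal_refl, inf_top_eq]
    · refine le_iInf fun p => ?_
      obtain ⟨b', j⟩ := p
      rw [le_himp_iff]
      show (b : A) ⊓ ((b' : A) ⊓ (f b').val j) ≤ HName.memVal ((f b').elts j) (f b)
      by_cases hbb : b = b'
      · subst hbb
        calc (b : A) ⊓ ((b : A) ⊓ (f b).val j) ≤ (f b).val j := by
              refine le_trans inf_le_right inf_le_right
          _ ≤ HName.memVal ((f b).elts j) (f b) := HName.self_mem (f b) j
      · have hne : (b : A) ≠ (b' : A) := fun hEq => hbb (Subtype.ext hEq)
        have : (b : A) ⊓ (b' : A) = ⊥ := hBanti b b.2 b' b'.2 hne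
        calc (b : A) ⊓ ((b' : A) ⊓ (f b').val j) ≤ (b : A) ⊓ (b' : A) :=
              inf_le_inf_left _ inf_le_left
          _ = ⊥ := this
          _ ≤ _ := bot_le
  have hmixle : ∀ b : ↥B, (b : A) ≤ I.val psi (fun _ => mix) := by
    intro b
    have h1 : (b : A) ≤ I.val psi (fun _ => f b) ⊓
        (I.val psi (fun _ => f b) ⇨ I.val psi (fun _ => mix)) :=
      le_inf (hfle b) (le_trans (hkey b) (I.leibniz psi (f b) mix))
    exact le_trans h1 inf_himp_le
  refine ⟨mix, eq_top_iff.2 ?_⟩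
  calc (⊤ : A) = sSup B := by rw [hBsup, hSsup]
    _ ≤ I.val psi (fun _ => mix) := sSup_le fun b hb => hmixle ⟨b, hb⟩
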